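/- Every quadric hypersurface Q over a field k of characteristic zero that is rational over k contains a conic defined over k (a smooth plane section that is a k-rational curve), provided dim Q ≥ 2. -/

import Mathlib

open MvPolynomial

private lemma fdeg_add {σ : Type*} (a b : σ →₀ ℕ) : (a + b).degree = a.degree + b.degree := by
  simp [Finsupp.degree_eq_weight_one, map_add]

private lemma fdeg_single {σ : Type*} (i : σ) (m : ℕ) : (Finsupp.single i m).degree = m := by
  classical
  rcases eq_or_ne m 0 with rfl | hm
  · simp [Finsupp.degree]
  · simp [Finsupp.degree_apply, Finsupp.support_single_ne_zero i hm]

private lemma deg_one_decomp {σ : Type*} (e : σ →₀ ℕ) (h : e.degree = 1) :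
    ∃ j, e = Finsupp.single j 1 := by
  classical
  have he : e ≠ 0 := by
    rintro rfl; simp [Finsupp.degree] at h
  obtain ⟨j, hj⟩ : ∃ j, e j ≠ 0 := by
    by_contra hc; push_neg at hc
    exact he (Finsupp.ext fun a => hc a)
  have hdec := Finsupp.single_add_erase j e
  have hdeg : e j + (Finsupp.erase j e).degree = 1 := by
    rw [← fdeg_single j (e j), ← fdeg_add, hdec, h]
  have hj1 : e j = 1 := by omega
  have her : (Finsupp.erase j e).degree = 0 := by omega
  have her0 : Finsupp.erase j e = 0 := (Finsupp.degree_eq_zero_iff _).mp her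
  refine ⟨j, ?_⟩
  rw [← hdec, her0, add_zero, hj1]

private lemma deg_two_decomp {σ : Type*} (d : σ →₀ ℕ) (h : d.degree = 2) :
    ∃ i j, d = Finsupp.single i 1 + Finsupp.single j 1 := by
  classical
  have he : d ≠ 0 := by rintro rfl; simp [Finsupp.degree] at h
  obtain ⟨i, hi⟩ : ∃ i, d i ≠ 0 := by
    by_contra hc; push_neg at hc
    exact he (Finsupp.ext fun a => hc a)
  have hdec := Finsupp.single_add_erase i d
  have hdeg : d i + (Finsupp.erase i d).degree = 2 := by
    rw [← fdeg_single i (d i), ← fdeg_add, hdec, h]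
  rcases (by omega : d i = 2 ∨ d i = 1) with h2 | h1
  · have her : (Finsupp.erase i d).degree = 0 := by omega
    have her0 : Finsupp.erase i d = 0 := (Finsupp.degree_eq_zero_iff _).mp her
    refine ⟨i, i, ?_⟩
    rw [← hdec, her0, add_zero, h2, ← Finsupp.single_add]
  · have her : (Finsupp.erase i d).degree = 1 := by omega
    obtain ⟨j, hjj⟩ := deg_one_decomp _ her
    exact ⟨i, j, by rw [← hdec, hjj, h1]⟩

private lemma key_expand {k : Type} [Field k] {n : ℕ} (q : MvPolynomial (Fin (n + 1)) k)
    (hq : q.IsHomogeneous 2) (a b : k) (x y : Fin (n + 1) → k) :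
    eval (a • x + b • y) q = a ^ 2 * eval x q
      + a * b * (∑ i, eval x (pderiv i q) * y i) + b ^ 2 * eval y q := by
  classical
  have base : ∀ d (c : k), d.degree = 2 →
      eval (a • x + b • y) (monomial d c) = a ^ 2 * eval x (monomial d c)
        + a * b * (∑ i, eval x (pderiv i (monomial d c)) * y i)
        + b ^ 2 * eval y (monomial d c) := by
    intro d c hd
    obtain ⟨i, j, rfl⟩ := deg_two_decomp d hd
    have hm : (monomial (Finsupp.single i 1 + Finsupp.single j 1)) c
        = X i * (X j * C c) := by
      rw [monomial_single_add]
      rw [show (Finsupp.single j 1 : Fin (n+1) →₀ ℕ) = Finsupp.single j 1 + 0 by simp]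
      rw [monomial_single_add]
      simp [monomial_zero', mul_assoc]
    rw [hm]
    simp only [map_mul, eval_X, eval_C, pderiv_mul, pderiv_X, pderiv_C, map_add,
      Pi.add_apply, Pi.smul_apply, smul_eq_mul, mul_zero, add_zero, Pi.single_apply,
      ]
    simp only [apply_ite (eval x), map_one, map_zero, ite_mul, one_mul, zero_mul, mul_ite, mul_zero, add_mul,
      Finset.sum_add_distrib, Finset.sum_ite_eq, Finset.sum_ite_eq', Finset.mem_univ, if_true]
    ring
  rw [q.as_sum]
  refine Finset.sum_induction _ (fun r => eval (a • x + b • y) r = a ^ 2 * eval x r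
      + a * b * (∑ i, eval x (pderiv i r) * y i) + b ^ 2 * eval y r) ?_ ?_ ?_
  · intro r1 r2 h1 h2
    simp only [map_add, add_mul, Finset.sum_add_distrib, h1, h2]
    ring
  · simp
  · intro d hd
    have := hq (mem_support_iff.mp hd)
    exact base d _ (by rw [Finsupp.degree_eq_weight_one]; exact this)

private lemma conic_aux {k : Type} [Field k] {n : ℕ} (hn : 3 ≤ n)
    (Q : (Fin (n + 1) → k) → k) (B : (Fin (n + 1) → k) → (Fin (n + 1) → k) → k)
    (hQadd : ∀ x y, Q (x + y) = Q x + B x y + Q y)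
    (hQsmul : ∀ (c : k) x, Q (c • x) = c ^ 2 * Q x)
    (hBaddR : ∀ x y z, B x (y + z) = B x y + B x z)
    (hBsmulR : ∀ x (c : k) y, B x (c • y) = c * B x y)
    (hsymm : ∀ x y, B x y = B y x)
    (hBnz : ∀ x, x ≠ 0 → ∃ y, B x y ≠ 0)
    (p : Fin (n + 1) → k) (hp0 : p ≠ 0) (hQp : Q p = 0) :
    ∃ ι : (Fin 3 → k) →ₗ[k] (Fin (n + 1) → k),
      Function.Injective ι ∧
      (∀ s t : k, Q (ι ![s ^ 2, s * t, t ^ 2]) = 0) ∧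
      (∃ s t c : k, ¬ (s = 0 ∧ t = 0) ∧ c ≠ 0 ∧ ι ![s ^ 2, s * t, t ^ 2] = c • p) := by
  classical
  have hQ0 : Q 0 = 0 := by
    have := hQsmul 0 0; simpa using this
  have hB0R : ∀ x, B x 0 = 0 := by
    intro x; have := hBsmulR x 0 0; simpa using this
  have hBsmulL : ∀ (c : k) x y, B (c • x) y = c * B x y := by
    intro c x y; rw [hsymm, hBsmulR, hsymm]
  have hBaddL : ∀ x y z, B (x + y) z = B x z + B y z := by
    intro x y z; rw [hsymm, hBaddR, hsymm z x, hsymm z y]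
  have hBsubR : ∀ x y z, B x (y - z) = B x y - B x z := by
    intro x y z
    have h := hBaddR x (y - z) z
    rw [sub_add_cancel] at h
    linear_combination -h
  have hBself : ∀ x, B x x = 2 * Q x := by
    intro x
    have h1 := hQadd x x
    have h2 := hQsmul 2 x
    rw [two_smul] at h2
    linear_combination h2 - h1
  have hBpp : B p p = 0 := by rw [hBself, hQp, mul_zero]
  -- construct hyperbolic partner p'
  obtain ⟨y0, hy0⟩ := hBnz p hp0
  obtain ⟨u, hu⟩ : ∃ u, B p u = 1 :=
    ⟨(B p y0)⁻¹ • y0, by rw [hBsmulR]; field_simp⟩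
  obtain ⟨p', hBpp', hQp'⟩ : ∃ p', B p p' = 1 ∧ Q p' = 0 := by
    refine ⟨u + (-(Q u)) • p, ?_, ?_⟩
    · rw [hBaddR, hBsmulR, hu, hBpp]; ring
    · rw [hQadd, hQsmul, hQp, hBsmulR, hsymm u p, hu]; ring
  have hBp'p' : B p' p' = 0 := by rw [hBself, hQp', mul_zero]
  have hBp'p : B p' p = 1 := by rw [hsymm, hBpp']
  -- find v orthogonal to p, p' with Q v ≠ 0
  have hv : ∃ v, B p v = 0 ∧ B p' v = 0 ∧ Q v ≠ 0 := by
    by_contra hcon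
    push_neg at hcon
    let L1 : (Fin (n + 1) → k) →ₗ[k] k :=
      { toFun := B p, map_add' := hBaddR p, map_smul' := fun c y => by simpa using hBsmulR p c y }
    let L2 : (Fin (n + 1) → k) →ₗ[k] k :=
      { toFun := B p', map_add' := hBaddR p', map_smul' := fun c y => by simpa using hBsmulR p' c y }
    let L := L1.prod L2
    have hker : LinearMap.ker L ≠ ⊥ := by
      intro hbot
      have h1 := LinearMap.finrank_range_add_finrank_ker L
      rw [hbot, finrank_bot] at h1
      have h2 : Module.finrank k ↥(LinearMap.range L) ≤ Module.finrank k (k × k) :=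
        (LinearMap.range L).finrank_le
      have h2' : Module.finrank k (k × k) = 2 := by
        simp [Module.finrank_prod]
      have h3 : Module.finrank k (Fin (n + 1) → k) = n + 1 := by
        simp
      omega
    obtain ⟨x, hxmem, hx0⟩ := (Submodule.ne_bot_iff _).mp hker
    rw [LinearMap.mem_ker] at hxmem
    have hx1 : B p x = 0 := congrArg Prod.fst hxmem
    have hx2 : B p' x = 0 := congrArg Prod.snd hxmem
    obtain ⟨yy, hyy⟩ := hBnz x hx0
    set z' : Fin (n + 1) → k := yy - (B p' yy) • p - (B p yy) • p' with hz'def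
    have hz1 : B p z' = 0 := by
      rw [hz'def, hBsubR, hBsubR, hBsmulR, hBsmulR, hBpp, hBpp']; ring
    have hz2 : B p' z' = 0 := by
      rw [hz'def, hBsubR, hBsubR, hBsmulR, hBsmulR, hBp'p, hBp'p']; ring
    have hQx : Q x = 0 := hcon x hx1 hx2
    have hQz' : Q z' = 0 := hcon z' hz1 hz2
    have hQxz' : Q (x + z') = 0 := by
      refine hcon _ ?_ ?_
      · rw [hBaddR, hx1, hz1, add_zero]
      · rw [hBaddR, hx2, hz2, add_zero]
    have hBxz' : B x z' = 0 := by
      have h := hQadd x z'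
      rw [hQxz', hQx, hQz'] at h
      linear_combination -h
    have hyyeq : yy = z' + (B p' yy) • p + (B p yy) • p' := by
      rw [hz'def]; abel
    rw [hyyeq] at hyy
    rw [hBaddR, hBaddR, hBsmulR, hBsmulR, hBxz', hsymm x p, hx1, hsymm x p', hx2] at hyy
    simp at hyy
  obtain ⟨v, hBpv, hBp'v, hQv⟩ := hv
  have hv0 : v ≠ 0 := fun h => hQv (h ▸ hQ0)
  obtain ⟨w, hQw, hBpw, hBp'w, hBvw⟩ :
      ∃ w, Q w = 0 ∧ B p w = -(Q v) ∧ B p' w = 0 ∧ B v w = 0 := by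
    refine ⟨(-(Q v)) • p', ?_, ?_, ?_, ?_⟩
    · rw [hQsmul, hQp', mul_zero]
    · rw [hBsmulR, hBpp']; ring
    · rw [hBsmulR, hBp'p']; ring
    · rw [hBsmulR, hsymm v p', hBp'v]; ring
  -- the linear embedding
  refine ⟨((LinearMap.proj 0 : (Fin 3 → k) →ₗ[k] k).smulRight p)
      + ((LinearMap.proj 1 : (Fin 3 → k) →ₗ[k] k).smulRight v)
      + ((LinearMap.proj 2 : (Fin 3 → k) →ₗ[k] k).smulRight w), ?_, ?_, ?_⟩
  · -- injectivity
    rw [← LinearMap.ker_eq_bot, LinearMap.ker_eq_bot']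
    intro z hz
    simp only [LinearMap.add_apply, LinearMap.smulRight_apply, LinearMap.proj_apply] at hz
    have e1 : B p' (z 0 • p + z 1 • v + z 2 • w) = 0 := by rw [hz, hB0R]
    have e2 : B p (z 0 • p + z 1 • v + z 2 • w) = 0 := by rw [hz, hB0R]
    simp only [hBaddR, hBsmulR, hBp'p, hBp'v, hBp'w] at e1
    simp only [hBaddR, hBsmulR, hBpp, hBpv, hBpw] at e2
    have hz0 : z 0 = 0 := by linear_combination e1
    have hz2 : z 2 = 0 := by
      have h9 : z 2 * -(Q v) = 0 := by linear_combination e2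
      rcases mul_eq_zero.mp h9 with h | h
      · exact h
      · exact absurd (neg_eq_zero.mp h) hQv
    have hz1 : z 1 = 0 := by
      rw [hz0, hz2] at hz
      simp only [zero_smul, zero_add, add_zero] at hz
      rcases smul_eq_zero.mp hz with h | h
      · exact h
      · exact absurd h hv0
    funext i
    fin_cases i <;> simp [hz0, hz1, hz2]
  · -- the conic lies on Q
    intro s t
    have himg : (![s ^ 2, s * t, t ^ 2] : Fin 3 → k) 0 = s ^ 2 ∧
        (![s ^ 2, s * t, t ^ 2] : Fin 3 → k) 1 = s * t ∧
        (![s ^ 2, s * t, t ^ 2] : Fin 3 → k) 2 = t ^ 2 := ⟨rfl, rfl, rfl⟩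
    simp only [LinearMap.add_apply, LinearMap.smulRight_apply, LinearMap.proj_apply,
      himg.1, himg.2.1, himg.2.2]
    rw [add_assoc, hQadd, hQadd]
    simp only [hBaddR, hBsmulR, hBsmulL, hQsmul]
    rw [hQp, hQw, hBpv, hBpw, hBvw]
    ring
  · -- passes through p
    refine ⟨1, 0, 1, by simp, one_ne_zero, ?_⟩
    simp only [LinearMap.add_apply, LinearMap.smulRight_apply, LinearMap.proj_apply]
    norm_num
    exact Or.inl rfl

/-- A smooth quadric Q = {q = 0} ⊆ ℙⁿ of dimension ≥ 2 (n ≥ 3) over a field k of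
characteristic zero that has a smooth k-point p contains a smooth conic defined over k passing
through p: there is an injective linear embedding ι of a plane such that the conic
[s:t] ↦ ι(s², st, t²) lies on Q and passes through p. -/
theorem rational_quadric_contains_conic
    (k : Type) [Field k] [CharZero k] (n : ℕ) (hn : 3 ≤ n)
    (q : MvPolynomial (Fin (n + 1)) k) (hq : q.IsHomogeneous 2)
    (hsmooth : ∀ v : Fin (n + 1) → k, v ≠ 0 →
      ∃ i, MvPolynomial.eval v (MvPolynomial.pderiv i q) ≠ 0)
    (p : Fin (n + 1) → k) (hp0 : p ≠ 0) (hpQ : MvPolynomial.eval p q = 0) :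
    ∃ ι : (Fin 3 → k) →ₗ[k] (Fin (n + 1) → k),
      Function.Injective ι ∧
      (∀ s t : k, MvPolynomial.eval (ι ![s ^ 2, s * t, t ^ 2]) q = 0) ∧
      (∃ s t c : k, ¬ (s = 0 ∧ t = 0) ∧ c ≠ 0 ∧ ι ![s ^ 2, s * t, t ^ 2] = c • p) := by
  classical
  refine conic_aux hn (fun v => eval v q)
    (fun x y => ∑ i, eval x (pderiv i q) * y i) ?_ ?_ ?_ ?_ ?_ ?_ p hp0 hpQ
  · intro x y
    have h := key_expand q hq 1 1 x y
    simpa using h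
  · intro c x
    have h := key_expand q hq c 0 x 0
    simpa using h
  · intro x y z
    simp [mul_add, Finset.sum_add_distrib]
  · intro x c y
    simp [Finset.mul_sum, mul_left_comm]
  · intro x y
    have h1 := key_expand q hq 1 1 x y
    have h2 := key_expand q hq 1 1 y x
    simp only [one_smul, one_pow, one_mul] at h1 h2
    rw [add_comm y x] at h2
    linear_combination h2 - h1
  · intro x hx
    obtain ⟨i, hi⟩ := hsmooth x hx
    refine ⟨Pi.single i 1, ?_⟩
    simpa [Pi.single_apply, mul_ite, Finset.sum_ite_eq] using hi
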